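/- The set of primes p such that p divides the denominator of (1/n)·∑_{d|n} μ(n/d)·F_d for some n ∈ ℕ is infinite. Concretely: for every odd prime p with p ≡ ±2 (mod 5), the rational number (1/p)(F_p − F_1) has denominator exactly p. -/

import Mathlib

structure QR (p : ℕ) where
  a : ZMod p
  b : ZMod p

namespace QR
variable {p : ℕ}

@[ext] lemma ext' (x y : QR p) (ha : x.a = y.a) (hb : x.b = y.b) : x = y := by
  cases x; cases y; simp_all

instance : Zero (QR p) := ⟨⟨0, 0⟩⟩
instance : One (QR p) := ⟨⟨1, 0⟩⟩
instance : Add (QR p) := ⟨fun x y => ⟨x.a + y.a, x.b + y.b⟩⟩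
instance : Neg (QR p) := ⟨fun x => ⟨-x.a, -x.b⟩⟩
instance : Mul (QR p) := ⟨fun x y => ⟨x.a * y.a + 5 * x.b * y.b, x.a * y.b + x.b * y.a⟩⟩

@[simp] lemma zero_a : (0 : QR p).a = 0 := rfl
@[simp] lemma zero_b : (0 : QR p).b = 0 := rfl
@[simp] lemma one_a : (1 : QR p).a = 1 := rfl
@[simp] lemma one_b : (1 : QR p).b = 0 := rfl
@[simp] lemma add_a (x y : QR p) : (x + y).a = x.a + y.a := rfl
@[simp] lemma add_b (x y : QR p) : (x + y).b = x.b + y.b := rfl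
@[simp] lemma neg_a (x : QR p) : (-x).a = -x.a := rfl
@[simp] lemma neg_b (x : QR p) : (-x).b = -x.b := rfl
@[simp] lemma mul_a (x y : QR p) : (x * y).a = x.a * y.a + 5 * x.b * y.b := rfl
@[simp] lemma mul_b (x y : QR p) : (x * y).b = x.a * y.b + x.b * y.a := rfl

instance : CommRing (QR p) where
  add_assoc x y z := by ext <;> simp <;> ring
  zero_add x := by ext <;> simp
  add_zero x := by ext <;> simp
  add_comm x y := by ext <;> simp <;> ring
  neg_add_cancel x := by ext <;> simp
  mul_assoc x y z := by ext <;> simp <;> ring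
  one_mul x := by ext <;> simp
  mul_one x := by ext <;> simp
  left_distrib x y z := by ext <;> simp <;> ring
  right_distrib x y z := by ext <;> simp <;> ring
  zero_mul x := by ext <;> simp
  mul_zero x := by ext <;> simp
  mul_comm x y := by ext <;> simp <;> ring
  nsmul := nsmulRec
  zsmul := zsmulRec

/-- the embedding of `ZMod p`. -/
def f : ZMod p →+* QR p where
  toFun a := ⟨a, 0⟩
  map_one' := rfl
  map_mul' x y := by ext <;> simp
  map_zero' := rfl
  map_add' x y := by ext <;> simp

@[simp] lemma f_a (x : ZMod p) : (f x).a = x := rfl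
@[simp] lemma f_b (x : ZMod p) : (f x).b = 0 := rfl

instance [Fact p.Prime] : Nontrivial (QR p) :=
  ⟨0, 1, fun h => zero_ne_one (α := ZMod p) (congrArg QR.a h)⟩

lemma f_inj : Function.Injective (f (p := p)) := fun x y h => congrArg QR.a h

instance [Fact p.Prime] : CharP (QR p) p := charP_of_injective_ringHom f_inj p

@[simp] lemma sub_a (x y : QR p) : (x - y).a = x.a - y.a := by
  rw [sub_eq_add_neg, add_a, neg_a, sub_eq_add_neg]

@[simp] lemma sub_b (x y : QR p) : (x - y).b = x.b - y.b := by
  rw [sub_eq_add_neg, add_b, neg_b, sub_eq_add_neg]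

@[simp] lemma natCast_a (n : ℕ) : ((n : QR p)).a = (n : ZMod p) := by
  rw [← map_natCast (f (p := p)) n, f_a]

@[simp] lemma natCast_b (n : ℕ) : ((n : QR p)).b = 0 := by
  rw [← map_natCast (f (p := p)) n, f_b]

end QR

namespace QR
variable {p : ℕ} [Fact p.Prime]

noncomputable def phi (p : ℕ) : QR p := ⟨(2 : ZMod p)⁻¹, (2 : ZMod p)⁻¹⟩

def s (p : ℕ) : QR p := ⟨0, 1⟩

@[simp] lemma s_a : (s p).a = 0 := rfl
@[simp] lemma s_b : (s p).b = 1 := rfl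
@[simp] lemma phi_a : (phi p).a = (2 : ZMod p)⁻¹ := rfl
@[simp] lemma phi_b : (phi p).b = (2 : ZMod p)⁻¹ := rfl

lemma s_sq : s p * s p = f 5 := by ext <;> simp

lemma two_ne_zero' (hodd : Odd p) : (2 : ZMod p) ≠ 0 := by
  have : ((2 : ℕ) : ZMod p) ≠ 0 := by
    rw [Ne, ZMod.natCast_eq_zero_iff]
    intro h
    have h2 : p = 2 := (Nat.prime_dvd_prime_iff_eq Fact.out Nat.prime_two).mp h
    rw [h2] at hodd
    exact (Nat.not_odd_iff_even.mpr (by decide)) hodd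
  simpa using this

lemma phi_mul_phi (hodd : Odd p) : phi p * phi p = phi p + 1 := by
  have h2 := two_ne_zero' (p := p) hodd
  have hi : (2 : ZMod p)⁻¹ * 2 = 1 := inv_mul_cancel₀ h2
  ext
  · simp only [mul_a, phi_a, phi_b, add_a, one_a]
    linear_combination ((3 : ZMod p) * (2 : ZMod p)⁻¹ + 1) * hi
  · simp only [mul_b, phi_a, phi_b, add_b, one_b]
    linear_combination (2 : ZMod p)⁻¹ * hi

lemma phi_pow (hodd : Odd p) (n : ℕ) :
    phi p ^ (n + 1) = f (Nat.fib (n + 1) : ZMod p) * phi p + f (Nat.fib n : ZMod p) := by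
  induction n with
  | zero => simp
  | succ n ih =>
    have h : phi p ^ (n + 1 + 1) = phi p ^ (n + 1) * phi p := by ring
    rw [h, ih, Nat.fib_add_two]
    push_cast
    rw [add_mul, mul_assoc, phi_mul_phi hodd, map_add]
    ring

lemma phi_eq : phi p = f (2 : ZMod p)⁻¹ * (1 + s p) := by ext <;> simp

lemma phi_pow_card (hodd : Odd p) (h5 : (5 : ZMod p) ^ (p / 2) = -1) :
    phi p ^ p = 1 - phi p := by
  have h2 := two_ne_zero' (p := p) hodd
  have hfrob : (1 + s p) ^ p = 1 + s p ^ p := by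
    rw [add_pow_char, one_pow]
  have hsp : s p ^ p = - s p := by
    obtain ⟨k, hk⟩ := hodd
    have hh : (s p * s p) ^ k * s p = s p ^ p := by rw [hk]; ring
    have h5k : (5 : ZMod p) ^ k = -1 := by
      have hk2 : p / 2 = k := by omega
      rw [← hk2, h5]
    rw [← hh, s_sq, ← map_pow, h5k]
    ext <;> simp
  have hfi : (f (2 : ZMod p)⁻¹ : QR p) ^ p = f (2 : ZMod p)⁻¹ := by
    rw [← map_pow, ZMod.pow_card]
  rw [phi_eq, mul_pow, hfi, hfrob, hsp]
  ext
  · simp only [mul_a, f_a, f_b, add_a, add_b, one_a, one_b, neg_a, neg_b, s_a, s_b,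
      sub_a, sub_b, phi_a, phi_b]
    have hi : (2 : ZMod p)⁻¹ * 2 = 1 := inv_mul_cancel₀ h2
    linear_combination hi
  · simp only [mul_b, f_a, f_b, add_a, add_b, one_a, one_b, neg_a, neg_b, s_a, s_b,
      sub_a, sub_b, phi_a, phi_b]
    ring

lemma fib_card_eq_neg_one (hodd : Odd p) (h5 : (5 : ZMod p) ^ (p / 2) = -1) :
    ((Nat.fib p : ZMod p)) = -1 := by
  have h2 := two_ne_zero' (p := p) hodd
  have hinv : (2 : ZMod p)⁻¹ ≠ 0 := inv_ne_zero h2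
  have hp1 : p - 1 + 1 = p := Nat.succ_pred_eq_of_pos (Fact.out : p.Prime).pos
  have key := phi_pow (p := p) hodd (p - 1)
  rw [hp1, phi_pow_card hodd h5] at key
  have hb := congrArg QR.b key
  simp only [sub_b, one_b, phi_b, mul_b, add_b, f_a, f_b] at hb
  apply mul_right_cancel₀ hinv
  linear_combination -hb

end QR
section Legendre

instance fact_prime_five : Fact (Nat.Prime 5) := ⟨by norm_num⟩

lemma five_pow_eq_neg_one (p : ℕ) [Fact p.Prime] (hp2 : p ≠ 2)
    (h5 : p % 5 = 2 ∨ p % 5 = 3) : (5 : ZMod p) ^ (p / 2) = -1 := by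
  have h1 := legendreSym.quadratic_reciprocity_one_mod_four (p := 5) (q := p) (by norm_num) hp2
  have h2 : legendreSym 5 (p : ℤ) = -1 := by
    rw [legendreSym.mod]
    have hm : ((p : ℤ) % (5 : ℕ)) = ((p % 5 : ℕ) : ℤ) := by push_cast; ring
    rw [hm]
    rcases h5 with h | h <;> rw [h]
    · have hns : ∀ r : ZMod 5, r * r ≠ 2 := by decide
      have hc : ((((2 : ℕ) : ℤ)) : ZMod 5) = 2 := by norm_num
      refine (legendreSym.eq_neg_one_iff 5).mpr (fun ⟨r, hr⟩ => hns r ?_)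
      rw [← hr, hc]
    · have hns : ∀ r : ZMod 5, r * r ≠ 3 := by decide
      have hc : ((((3 : ℕ) : ℤ)) : ZMod 5) = 3 := by norm_num
      refine (legendreSym.eq_neg_one_iff 5).mpr (fun ⟨r, hr⟩ => hns r ?_)
      rw [← hr, hc]
  have h3 := legendreSym.eq_pow p (((5 : ℕ) : ℤ))
  rw [← h1] at h2
  rw [h2] at h3
  push_cast at h3
  exact h3.symm

lemma fib_mod_eq_neg_one (p : ℕ) (hp : p.Prime) (hodd : Odd p)
    (h5 : p % 5 = 2 ∨ p % 5 = 3) : (Nat.fib p : ZMod p) = -1 := by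
  have : Fact p.Prime := ⟨hp⟩
  have hp2 : p ≠ 2 := by rintro rfl; exact (by decide : ¬ Odd 2) hodd
  exact QR.fib_card_eq_neg_one hodd (five_pow_eq_neg_one p hp2 h5)

lemma not_dvd_fib_sub_one (p : ℕ) (hp : p.Prime) (hodd : Odd p)
    (h5 : p % 5 = 2 ∨ p % 5 = 3) : ¬ (p : ℤ) ∣ ((Nat.fib p : ℤ) - 1) := by
  have : Fact p.Prime := ⟨hp⟩
  intro h
  have h0 : (((Nat.fib p : ℤ) - 1 : ℤ) : ZMod p) = 0 :=
    (ZMod.intCast_zmod_eq_zero_iff_dvd _ p).mpr h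
  push_cast at h0
  rw [fib_mod_eq_neg_one p hp hodd h5] at h0
  have h2 : ((2 : ℕ) : ZMod p) = 0 := by push_cast; linear_combination -h0
  rw [ZMod.natCast_eq_zero_iff] at h2
  have := (Nat.prime_dvd_prime_iff_eq hp Nat.prime_two).mp h2
  rw [this] at hodd
  exact (by decide : ¬ Odd 2) hodd

lemma den_fib_eq (p : ℕ) (hp : p.Prime) (hodd : Odd p)
    (h5 : p % 5 = 2 ∨ p % 5 = 3) : (((Nat.fib p : ℚ) - 1) / p).den = p := by
  have hco : Nat.Coprime ((Nat.fib p : ℤ) - 1).natAbs ((p : ℤ)).natAbs := by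
    rw [Nat.coprime_comm, Int.natAbs_natCast]
    refine (hp.coprime_iff_not_dvd).mpr (fun hd => not_dvd_fib_sub_one p hp hodd h5 ?_)
    rw [← Int.natAbs_dvd_natAbs, Int.natAbs_natCast]
    exact hd
  have hb0 : (0 : ℤ) < (p : ℤ) := by exact_mod_cast hp.pos
  have := Rat.den_div_eq_of_coprime hb0 hco
  have heq : ((((Nat.fib p : ℤ) - 1 : ℤ) : ℚ) / ((p : ℤ) : ℚ)) = ((Nat.fib p : ℚ) - 1) / p := by
    push_cast; ring
  rw [heq] at this
  exact_mod_cast this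

end Legendre

open ArithmeticFunction ArithmeticFunction.Moebius in
theorem fib_dold_denominators_infinite :
    {p : ℕ | p.Prime ∧ ∃ n : ℕ, 0 < n ∧
      (p : ℤ) ∣ ((((∑ d ∈ n.divisors, (μ (n / d) : ℚ) * Nat.fib d) / n : ℚ)).den : ℤ)}.Infinite
    ∧
    ∀ p : ℕ, p.Prime → Odd p → (p % 5 = 2 ∨ p % 5 = 3) →
      ((((Nat.fib p : ℚ) - Nat.fib 1) / p).den) = p := by
  constructor
  · have hu : IsUnit (3 : ZMod 5) := by decide
    refine (Nat.infinite_setOfPred_prime_and_eq_mod hu).mono ?_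
    rintro p ⟨hp, hmod⟩
    have h5 : p % 5 = 3 := by
      have h : ((p % 5 : ℕ) : ZMod 5) = 3 := by rw [ZMod.natCast_mod]; exact hmod
      have hlt : p % 5 < 5 := Nat.mod_lt _ (by norm_num)
      interval_cases h' : p % 5 <;> first | rfl | (exfalso; revert h; decide)
    have hp2 : p ≠ 2 := by rintro rfl; simp at h5
    have hodd : Odd p := hp.odd_of_ne_two hp2
    refine ⟨hp, p, hp.pos, ?_⟩
    have hsum : (∑ d ∈ p.divisors, ((μ (p / d) : ℤ) : ℚ) * Nat.fib d) = (Nat.fib p : ℚ) - 1 := by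
      rw [hp.divisors, Finset.sum_pair hp.one_lt.ne, Nat.div_one, Nat.div_self hp.pos,
        ArithmeticFunction.moebius_apply_prime hp, ArithmeticFunction.moebius_apply_one]
      push_cast [Nat.fib_one]
      ring
    rw [hsum, den_fib_eq p hp hodd (Or.inr h5)]
  · intro p hp hodd h5
    have h1 : (Nat.fib 1 : ℚ) = 1 := by norm_num
    rw [h1]
    exact den_fib_eq p hp hodd h5
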